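/- Let c₁, c₂ : ℝ² → ℝ (functions of (φ, θ)) be twice continuously differentiable. Then the following are equivalent: (i) for all (φ, θ): ∂_φ c₁(φ, θ) + c₂(φ, θ) · sinh θ = 0, ∂_θ c₂(φ, θ) = 0, and ∂_φ c₂(φ, θ) = cosh θ · ∂_θ c₁(φ, θ) − c₁(φ, θ) · sinh θ; (ii) there exist constants B, B₁, B₂ ∈ ℝ such that for all (φ, θ): c₁(φ, θ) = −sinh θ · (B₁ cos φ + B₂ sin φ) + B · cosh θ and c₂(φ, θ) = −B₁ sin φ + B₂ cos φ. -/

import Mathlib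

open Real

lemma const_of_hasDerivAt_zero (f : ℝ → ℝ) (hf : ∀ x, HasDerivAt f 0 x) (x : ℝ) : f x = f 0 :=
  is_const_of_deriv_eq_zero (fun x => (hf x).differentiableAt) (fun x => (hf x).deriv) x 0

lemma sliceX (F : ℝ × ℝ → ℝ) (x y : ℝ) (hF : DifferentiableAt ℝ F (x, y)) :
    HasDerivAt (fun s => F (s, y)) (fderiv ℝ F (x, y) (1, 0)) x :=
  hF.hasFDerivAt.comp_hasDerivAt x (HasDerivAt.prodMk (hasDerivAt_id x) (hasDerivAt_const x y))

lemma sliceY (F : ℝ × ℝ → ℝ) (x y : ℝ) (hF : DifferentiableAt ℝ F (x, y)) :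
    HasDerivAt (fun t => F (x, t)) (fderiv ℝ F (x, y) (0, 1)) y :=
  hF.hasFDerivAt.comp_hasDerivAt y (HasDerivAt.prodMk (hasDerivAt_const y x) (hasDerivAt_id y))

lemma sho (v w : ℝ → ℝ) (hv : ∀ x, HasDerivAt v (w x) x)
    (hw : ∀ x, HasDerivAt w (-(v x)) x) (x : ℝ) :
    v x = v 0 * Real.cos x + w 0 * Real.sin x := by
  have he : ∀ x, HasDerivAt (fun x => v x - v 0 * cos x - w 0 * sin x)
      (w x + v 0 * sin x - w 0 * cos x) x := by
    intro x
    have := ((hv x).sub (((Real.hasDerivAt_cos x).const_mul (v 0)))).sub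
      ((Real.hasDerivAt_sin x).const_mul (w 0))
    refine this.congr_deriv ?_; ring
  have hf : ∀ x, HasDerivAt (fun x => w x + v 0 * sin x - w 0 * cos x)
      (-(v x - v 0 * cos x - w 0 * sin x)) x := by
    intro x
    have := ((hw x).add (((Real.hasDerivAt_sin x).const_mul (v 0)))).sub
      ((Real.hasDerivAt_cos x).const_mul (w 0))
    refine this.congr_deriv ?_; ring
  have hE : ∀ x, HasDerivAt (fun x => (v x - v 0 * cos x - w 0 * sin x)^2
      + (w x + v 0 * sin x - w 0 * cos x)^2) 0 x := by
    intro x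
    have := ((he x).pow 2).add ((hf x).pow 2)
    refine this.congr_deriv ?_; push_cast; ring
  have hC := const_of_hasDerivAt_zero _ hE x
  simp at hC
  nlinarith [sq_nonneg (v x - v 0 * cos x - w 0 * sin x),
    sq_nonneg (w x + v 0 * sin x - w 0 * cos x)]

lemma ode_theta (g : ℝ → ℝ) (w : ℝ)
    (hg : ∀ t, HasDerivAt g ((w + g t * sinh t) / cosh t) t) (t : ℝ) :
    g t = g 0 * cosh t + w * sinh t := by
  have hK : ∀ t, HasDerivAt (fun t => (g t - g 0 * cosh t - w * sinh t) / cosh t) 0 t := by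
    intro t
    have hc := Real.cosh_pos t
    have hnum := ((hg t).sub ((Real.hasDerivAt_cosh t).const_mul (g 0))).sub
      ((Real.hasDerivAt_sinh t).const_mul w)
    have := hnum.div (Real.hasDerivAt_cosh t) hc.ne'
    refine this.congr_deriv ?_
    have h1 := Real.cosh_sq_sub_sinh_sq t
    simp only [Pi.sub_apply]
    field_simp
    ring_nf
    linear_combination (-w) * h1
  have hC := const_of_hasDerivAt_zero _ hK t
  simp at hC
  have hc := Real.cosh_pos t
  rcases hC with h | h
  · linarith
  · exact absurd h hc.ne'

theorem stmt_15 (c₁ c₂ : ℝ × ℝ → ℝ) (hc₁ : ContDiff ℝ 2 c₁) (hc₂ : ContDiff ℝ 2 c₂) :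
    ((∀ φ θ : ℝ,
        fderiv ℝ c₁ (φ, θ) (1, 0) + c₂ (φ, θ) * sinh θ = 0 ∧
        fderiv ℝ c₂ (φ, θ) (0, 1) = 0 ∧
        fderiv ℝ c₂ (φ, θ) (1, 0)
          = cosh θ * fderiv ℝ c₁ (φ, θ) (0, 1) - c₁ (φ, θ) * sinh θ)
      ↔
      (∃ B B₁ B₂ : ℝ, ∀ φ θ : ℝ,
        c₁ (φ, θ) = -sinh θ * (B₁ * cos φ + B₂ * sin φ) + B * cosh θ ∧
        c₂ (φ, θ) = -B₁ * sin φ + B₂ * cos φ)) := by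
  have hd₁ : Differentiable ℝ c₁ := hc₁.differentiable (by norm_num)
  have hd₂ : Differentiable ℝ c₂ := hc₂.differentiable (by norm_num)
  constructor
  · intro H
    -- c₂ does not depend on θ
    have hA : ∀ φ θ : ℝ, c₂ (φ, θ) = c₂ (φ, 0) := by
      intro φ θ
      have hz : ∀ t : ℝ, HasDerivAt (fun t => c₂ (φ, t)) 0 t := by
        intro t
        have hs := sliceY c₂ φ t (hd₂ _)
        rwa [(H φ t).2.1] at hs
      exact const_of_hasDerivAt_zero _ hz θ
    -- ∂_φ c₂ does not depend on θ
    have hvw : ∀ φ : ℝ, HasDerivAt (fun s => c₂ (s, 0)) (fderiv ℝ c₂ (φ, 0) (1, 0)) φ :=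
      fun φ => sliceX c₂ φ 0 (hd₂ _)
    have hwθ : ∀ φ θ : ℝ, fderiv ℝ c₂ (φ, θ) (1, 0) = fderiv ℝ c₂ (φ, 0) (1, 0) := by
      intro φ θ
      have hs := sliceX c₂ φ θ (hd₂ _)
      have heq : (fun s => c₂ (s, θ)) = fun s => c₂ (s, 0) := funext fun s => hA s θ
      rw [heq] at hs
      exact hs.unique (hvw φ)
    -- solve the θ-ODE for c₁
    have hstar : ∀ φ θ : ℝ,
        c₁ (φ, θ) = c₁ (φ, 0) * cosh θ + fderiv ℝ c₂ (φ, 0) (1, 0) * sinh θ := by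
      intro φ θ
      refine ode_theta (fun t => c₁ (φ, t)) (fderiv ℝ c₂ (φ, 0) (1, 0)) ?_ θ
      intro t
      have hs := sliceY c₁ φ t (hd₁ _)
      have h3 := (H φ t).2.2
      rw [hwθ φ t] at h3
      have hc := Real.cosh_pos t
      have hval : fderiv ℝ c₁ (φ, t) (0, 1)
          = (fderiv ℝ c₂ (φ, 0) (1, 0) + c₁ (φ, t) * sinh t) / cosh t := by
        rw [eq_div_iff hc.ne']
        linarith [mul_comm (cosh t) (fderiv ℝ c₁ (φ, t) (0, 1))]
      rwa [hval] at hs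
    -- c₁(·,0) is constant
    have hB : ∀ φ : ℝ, c₁ (φ, 0) = c₁ (0, 0) := by
      have hz : ∀ φ : ℝ, HasDerivAt (fun s => c₁ (s, 0)) 0 φ := by
        intro φ
        have hs := sliceX c₁ φ 0 (hd₁ _)
        have h1 := (H φ 0).1
        simp [Real.sinh_zero] at h1
        rwa [h1] at hs
      exact fun φ => const_of_hasDerivAt_zero _ hz φ
    -- derivative of w
    have hs1 : Real.sinh 1 ≠ 0 := (Real.sinh_pos_iff.mpr one_pos).ne'
    have hw' : ∀ φ : ℝ, HasDerivAt (fun s => fderiv ℝ c₂ (s, 0) (1, 0)) (-(c₂ (φ, 0))) φ := by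
      intro φ
      have key : (fun s => fderiv ℝ c₂ (s, 0) (1, 0))
          = fun s => (c₁ (s, 1) - c₁ (0, 0) * cosh 1) / sinh 1 := by
        funext s
        have h := hstar s 1
        rw [hB s] at h
        rw [eq_div_iff hs1]
        linarith
      rw [key]
      have hs := sliceX c₁ φ 1 (hd₁ _)
      have hder : HasDerivAt (fun s => (c₁ (s, 1) - c₁ (0, 0) * cosh 1) / sinh 1)
          (fderiv ℝ c₁ (φ, 1) (1, 0) / sinh 1) φ := (hs.sub_const _).div_const _
      have h1 := (H φ 1).1
      have hval : fderiv ℝ c₁ (φ, 1) (1, 0) / sinh 1 = -(c₂ (φ, 0)) := by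
        rw [div_eq_iff hs1]
        rw [← hA φ 1]
        linarith
      rwa [hval] at hder
    -- solve the SHO
    have hsho := sho (fun s => c₂ (s, 0)) (fun s => fderiv ℝ c₂ (s, 0) (1, 0)) hvw hw'
    beta_reduce at hsho
    -- w explicit
    have hwval : ∀ φ : ℝ, fderiv ℝ c₂ (φ, 0) (1, 0)
        = fderiv ℝ c₂ (0, 0) (1, 0) * cos φ - c₂ (0, 0) * sin φ := by
      intro φ
      have heq : (fun s => c₂ (s, 0))
          = fun s => c₂ (0, 0) * cos s + fderiv ℝ c₂ (0, 0) (1, 0) * sin s :=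
        funext fun s => hsho s
      have hd : HasDerivAt (fun s => c₂ (0, 0) * cos s + fderiv ℝ c₂ (0, 0) (1, 0) * sin s)
          (c₂ (0, 0) * (-sin φ) + fderiv ℝ c₂ (0, 0) (1, 0) * cos φ) φ :=
        ((Real.hasDerivAt_cos φ).const_mul _).add ((Real.hasDerivAt_sin φ).const_mul _)
      have := hvw φ
      rw [heq] at this
      have := this.unique hd
      rw [this]; ring
    refine ⟨c₁ (0, 0), -(fderiv ℝ c₂ (0, 0) (1, 0)), c₂ (0, 0), fun φ θ => ⟨?_, ?_⟩⟩
    · rw [hstar φ θ, hB φ, hwval φ]; ring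
    · rw [hA φ θ, hsho φ]; ring
  · rintro ⟨B, B₁, B₂, h⟩
    have e₁ : c₁ = fun p : ℝ × ℝ => -sinh p.2 * (B₁ * cos p.1 + B₂ * sin p.1) + B * cosh p.2 :=
      funext fun p => (h p.1 p.2).1
    have e₂ : c₂ = fun p : ℝ × ℝ => -B₁ * sin p.1 + B₂ * cos p.1 :=
      funext fun p => (h p.1 p.2).2
    subst e₁ e₂
    intro φ θ
    have hF1x : fderiv ℝ (fun p : ℝ × ℝ => -sinh p.2 * (B₁ * cos p.1 + B₂ * sin p.1) + B * cosh p.2)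
        (φ, θ) (1, 0) = -sinh θ * (B₁ * (-sin φ) + B₂ * cos φ) := by
      refine (sliceX _ φ θ (hd₁ _)).unique ?_
      exact ((((Real.hasDerivAt_cos φ).const_mul B₁).add
        ((Real.hasDerivAt_sin φ).const_mul B₂)).const_mul (-sinh θ)).add_const (B * cosh θ)
    have hF1y : fderiv ℝ (fun p : ℝ × ℝ => -sinh p.2 * (B₁ * cos p.1 + B₂ * sin p.1) + B * cosh p.2)
        (φ, θ) (0, 1) = -cosh θ * (B₁ * cos φ + B₂ * sin φ) + B * sinh θ := by
      refine (sliceY _ φ θ (hd₁ _)).unique ?_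
      exact (((Real.hasDerivAt_sinh θ).neg.mul_const (B₁ * cos φ + B₂ * sin φ))).add
        ((Real.hasDerivAt_cosh θ).const_mul B)
    have hF2x : fderiv ℝ (fun p : ℝ × ℝ => -B₁ * sin p.1 + B₂ * cos p.1)
        (φ, θ) (1, 0) = -B₁ * cos φ + B₂ * (-sin φ) := by
      refine (sliceX _ φ θ (hd₂ _)).unique ?_
      exact ((Real.hasDerivAt_sin φ).const_mul (-B₁)).add ((Real.hasDerivAt_cos φ).const_mul B₂)
    have hF2y : fderiv ℝ (fun p : ℝ × ℝ => -B₁ * sin p.1 + B₂ * cos p.1)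
        (φ, θ) (0, 1) = 0 := by
      refine (sliceY _ φ θ (hd₂ _)).unique ?_
      show HasDerivAt (fun _ : ℝ => -B₁ * sin φ + B₂ * cos φ) 0 θ
      exact hasDerivAt_const θ _
    refine ⟨?_, ?_, ?_⟩
    · rw [hF1x]; ring
    · rw [hF2y]
    · rw [hF2x, hF1y]
      have h1 := Real.cosh_sq_sub_sinh_sq θ
      linear_combination (B₁ * cos φ + B₂ * sin φ) * h1
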